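/- arXiv:1412.1222 — 5 statements merged into one kernel-verified Lean document; each statement's English description precedes it below -/
import Mathlib

section
/- Let Ω ⊆ [-1,1] be measurable, X = L²(Ω), f ∈ X with (1-t)^{-1} f(t) ∈ L²(Ω), and suppose the set {t ∈ Ω : t = -1} has measure zero. Define x_n(t) = t^n x_0(t) + (1 + t + ⋯ + t^{n-1}) f(t) for x_0 ∈ L²(Ω). Then x_n converges in L²(Ω) to the function x*(t) = (1-t)^{-1} f(t). -/
open Filter MeasureTheory

theorem stmt8 (Ω : Set ℝ) (hΩ : MeasurableSet Ω) (hsub : Ω ⊆ Set.Icc (-1 : ℝ) 1)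
    (f x₀ : ℝ → ℝ)
    (hf : MemLp f 2 (volume.restrict Ω))
    (hx₀ : MemLp x₀ 2 (volume.restrict Ω))
    (hstar : MemLp (fun t => (1 - t)⁻¹ * f t) 2 (volume.restrict Ω))
    (hneg : (volume.restrict Ω) {(-1 : ℝ)} = 0) :
    Tendsto
      (fun n : ℕ =>
        eLpNorm
          (fun t : ℝ =>
            (t ^ n * x₀ t + (∑ i ∈ Finset.range n, t ^ i) * f t) - (1 - t)⁻¹ * f t)
          2 (volume.restrict Ω))
      atTop (nhds 0) := by
  set μ := volume.restrict Ω with hμ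
  set d : ℝ → ℝ := fun t => x₀ t - (1 - t)⁻¹ * f t with hd
  have hdmem : MemLp d 2 μ := hx₀.sub hstar
  have hone : μ {(1 : ℝ)} = 0 := by
    refine le_antisymm ?_ (zero_le (a := _))
    calc μ {(1:ℝ)} ≤ volume {(1:ℝ)} := Measure.restrict_le_self _
    _ = 0 := Real.volume_singleton
  have hae : ∀ᵐ t ∂μ, |t| < 1 := by
    have h1 : ∀ᵐ t ∂μ, t ≠ 1 := by rw [ae_iff]; simpa using hone
    have h2 : ∀ᵐ t ∂μ, t ≠ -1 := by rw [ae_iff]; simpa using hneg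
    have h3 : ∀ᵐ t ∂μ, t ∈ Ω := ae_restrict_mem hΩ
    filter_upwards [h1, h2, h3] with t ht1 ht2 ht3
    rcases hsub ht3 with ⟨hlo, hhi⟩
    rw [abs_lt]
    exact ⟨lt_of_le_of_ne hlo (Ne.symm ht2), lt_of_le_of_ne hhi ht1⟩
  have hcongr : ∀ n : ℕ,
      (fun t : ℝ =>
        (t ^ n * x₀ t + (∑ i ∈ Finset.range n, t ^ i) * f t) - (1 - t)⁻¹ * f t)
      =ᵐ[μ] fun t => t ^ n * d t := by
    intro n
    filter_upwards [hae] with t ht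
    have ht1 : t ≠ 1 := by intro h; rw [h] at ht; simp at ht
    have hne : (1 : ℝ) - t ≠ 0 := sub_ne_zero.mpr (Ne.symm ht1)
    have hsum : (∑ i ∈ Finset.range n, t ^ i) = (1 - t ^ n) * (1 - t)⁻¹ := by
      rw [geom_sum_eq ht1, div_eq_mul_inv, show (t - 1 : ℝ) = -(1 - t) by ring,
        show (t ^ n - 1 : ℝ) = -(1 - t ^ n) by ring, inv_neg]
      ring
    rw [hsum, hd]
    ring
  have heq : (fun n : ℕ =>
      eLpNorm
        (fun t : ℝ =>
          (t ^ n * x₀ t + (∑ i ∈ Finset.range n, t ^ i) * f t) - (1 - t)⁻¹ * f t)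
        2 μ) = fun n => eLpNorm (fun t => t ^ n * d t) 2 μ :=
    funext fun n => eLpNorm_congr_ae (hcongr n)
  rw [heq]
  have hmeas : AEStronglyMeasurable d μ := hdmem.1
  have key : Tendsto (fun n : ℕ => ∫⁻ t, (‖t ^ n * d t‖₊ : ENNReal) ^ (2 : ℝ) ∂μ)
      atTop (nhds 0) := by
    have h0 : (nhds (0 : ENNReal)) = nhds (∫⁻ t, (0 : ENNReal) ∂μ) := by simp
    rw [h0]
    apply tendsto_lintegral_of_dominated_convergence'
      (fun t => (‖d t‖₊ : ENNReal) ^ (2 : ℝ))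
    · intro n
      exact (((measurable_id.pow_const n).aemeasurable.mul
        hmeas.aemeasurable).nnnorm.coe_nnreal_ennreal).pow_const _
    · intro n
      filter_upwards [hae] with t ht
      have h1 : ‖t ^ n * d t‖₊ ≤ ‖d t‖₊ := by
        rw [← NNReal.coe_le_coe]
        simp only [coe_nnnorm, Real.norm_eq_abs, abs_mul, abs_pow]
        calc |t| ^ n * |d t| ≤ 1 ^ n * |d t| := by
              apply mul_le_mul_of_nonneg_right (pow_le_pow_left₀ (abs_nonneg t) ht.le n)
                (abs_nonneg _)
        _ = |d t| := by simp
      exact ENNReal.rpow_le_rpow (by exact_mod_cast h1) (by norm_num)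

    · have := lintegral_rpow_enorm_lt_top_of_eLpNorm_lt_top (f := d) (μ := μ) (p := 2)
        two_ne_zero ENNReal.ofNat_ne_top hdmem.2
      simpa [enorm_eq_nnnorm] using this.ne
    · filter_upwards [hae] with t ht
      have htend : Tendsto (fun n : ℕ => t ^ n * d t) atTop (nhds 0) := by
        simpa using (tendsto_pow_atTop_nhds_zero_of_abs_lt_one ht).mul_const (d t)
      have hc : Continuous fun x : ℝ => ((‖x‖₊ : ENNReal)) ^ (2 : ℝ) :=
        ENNReal.continuous_rpow_const.comp (ENNReal.continuous_coe.comp continuous_nnnorm)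
      have := (hc.tendsto 0).comp htend
      simpa only [Function.comp_def, nnnorm_zero, ENNReal.coe_zero,
        ENNReal.zero_rpow_of_pos (by norm_num : (0:ℝ) < 2)] using this
  have hform : (fun n : ℕ => eLpNorm (fun t => t ^ n * d t) 2 μ)
      = fun n => (∫⁻ t, (‖t ^ n * d t‖₊ : ENNReal) ^ (2 : ℝ) ∂μ) ^ ((1 : ℝ) / 2) := by
    funext n
    rw [eLpNorm_eq_lintegral_rpow_enorm_toReal two_ne_zero ENNReal.ofNat_ne_top]
    simp only [enorm_eq_nnnorm]
    norm_num
  rw [hform]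
  have := (ENNReal.continuous_rpow_const (y := (1 : ℝ) / 2)).tendsto 0
  have h2 := this.comp key
  simpa only [Function.comp_def,
    ENNReal.zero_rpow_of_pos (by norm_num : (0:ℝ) < 1/2)] using h2
end

section
/- Let α > 0 and k a positive integer. For all λ ≥ 0, |1/(1 + αλ^k)| ≤ 1, and for s > 0 and n > s/k, max_{λ ≥ 0} λ^s (1 + αλ^k)^{-n} = (s/(α(nk - s)))^{s/k} ((nk - s)/(nk))^n. -/
open Real

/-- Key inequality: for `0 < a < N` and `t ≥ 0`,
`t ^ a ≤ (a/(N-a))^a * ((N-a)/N)^N * (1+t)^N` (all real powers). -/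
lemma key_rpow_ineq {a N t : ℝ} (ha : 0 < a) (haN : a < N) (ht : 0 ≤ t) :
    t ^ a ≤ (a / (N - a)) ^ a * (((N - a) / N) ^ N * (1 + t) ^ N) := by
  have hN : 0 < N := ha.trans haN
  have hNa : 0 < N - a := sub_pos.2 haN
  set t₀ : ℝ := a / (N - a) with ht₀def
  have ht₀ : 0 < t₀ := div_pos ha hNa
  have hx : 0 ≤ t / t₀ := div_nonneg ht ht₀.le
  have hgm := Real.geom_mean_le_arith_mean2_weighted
      (div_nonneg ha.le hN.le) (by positivity : (0:ℝ) ≤ (N - a) / N)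
      hx zero_le_one (by field_simp; ring)
  -- simplify RHS of hgm
  have hrhs : a / N * (t / t₀) + (N - a) / N * 1 = (N - a) / N * (1 + t) := by
    rw [ht₀def]
    field_simp
    ring
  rw [Real.one_rpow, mul_one, hrhs] at hgm
  -- raise to power N
  have h2 : ((t / t₀) ^ (a / N)) ^ N ≤ ((N - a) / N * (1 + t)) ^ N :=
    Real.rpow_le_rpow (Real.rpow_nonneg hx _) hgm hN.le
  rw [← Real.rpow_mul hx, div_mul_cancel₀ _ hN.ne',
    Real.mul_rpow (by positivity) (by positivity)] at h2
  have h3 : t ^ a = t₀ ^ a * (t / t₀) ^ a := by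
    rw [Real.div_rpow ht ht₀.le, mul_div_cancel₀]
    exact (Real.rpow_pos_of_pos ht₀ a).ne'
  rw [h3, ← mul_assoc]
  calc t₀ ^ a * (t / t₀) ^ a ≤ t₀ ^ a * (((N - a) / N) ^ N * (1 + t) ^ N) := by
        apply mul_le_mul_of_nonneg_left h2 (Real.rpow_nonneg ht₀.le a)
    _ = t₀ ^ a * ((N - a) / N) ^ N * (1 + t) ^ N := by ring

theorem stmt15 (α : ℝ) (hα : 0 < α) (k : ℕ) (hk : 0 < k) (s : ℝ) (hs : 0 < s)
    (n : ℕ) (hn : s / k < n) :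
    (∀ l : ℝ, 0 ≤ l → |1 / (1 + α * l ^ k)| ≤ 1) ∧
    IsGreatest ((fun l : ℝ => l ^ s / (1 + α * l ^ k) ^ n) '' Set.Ici 0)
      ((s / (α * ((n : ℝ) * k - s))) ^ (s / k) *
        (((n : ℝ) * k - s) / ((n : ℝ) * k)) ^ n) := by
  have hkR : (0:ℝ) < k := Nat.cast_pos.2 hk
  have hnk : s < (n:ℝ) * k := by
    have := (div_lt_iff₀ hkR).1 hn; linarith
  have hnks : (0:ℝ) < (n:ℝ) * k - s := sub_pos.2 hnk
  have hnR : (0:ℝ) < (n:ℝ) * k := hs.trans hnk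
  have hn0 : (0:ℝ) < (n:ℝ) := lt_trans (div_pos hs hkR) hn
  have hbase : (0:ℝ) < s / (α * ((n:ℝ) * k - s)) := by positivity
  constructor
  · intro l hl
    have h1 : (1:ℝ) ≤ 1 + α * l ^ k := by
      have : 0 ≤ α * l ^ k := by positivity
      linarith
    rw [abs_div, abs_one, abs_of_pos (by linarith)]
    rw [div_le_one (by linarith)]
    exact h1
  · constructor
    · -- membership : attained at l₀
      refine ⟨(s / (α * ((n:ℝ) * k - s))) ^ ((1:ℝ)/k), Set.mem_Ici.2 (Real.rpow_nonneg hbase.le _), ?_⟩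
      set b : ℝ := s / (α * ((n:ℝ) * k - s)) with hbdef
      have hl0k : ((b ^ ((1:ℝ)/k)) ^ k : ℝ) = b := by
        rw [← Real.rpow_natCast (b ^ ((1:ℝ)/k)) k, ← Real.rpow_mul hbase.le,
          one_div, inv_mul_cancel₀ hkR.ne', Real.rpow_one]
      have hl0s : ((b ^ ((1:ℝ)/k)) ^ s : ℝ) = b ^ (s / k) := by
        rw [← Real.rpow_mul hbase.le]
        congr 1; field_simp
      simp only [hl0k, hl0s]
      have hab : α * b = s / ((n:ℝ) * k - s) := by
        rw [hbdef]; field_simp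
      rw [hab]
      have h1b : 1 + s / ((n:ℝ) * k - s) = (n:ℝ) * k / ((n:ℝ) * k - s) := by
        field_simp
        ring
      rw [h1b, div_pow, div_div_eq_mul_div, div_eq_iff (by positivity)]
      rw [div_pow]
      field_simp
    · -- upper bound
      rintro y ⟨l, hl, rfl⟩
      simp only [Set.mem_Ici] at hl
      have hden : (0:ℝ) < (1 + α * l ^ k) ^ n := by positivity
      rw [div_le_iff₀ hden]
      have ha : 0 < s / (k:ℝ) := div_pos hs hkR
      have haN : s / (k:ℝ) < n := hn
      have key := key_rpow_ineq ha haN (t := α * l ^ k) (by positivity)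
      -- rewrite constants
      have e1 : s / (k:ℝ) / ((n:ℝ) - s / k) = s / ((n:ℝ) * k - s) := by
        rw [div_div]
        have h : (k:ℝ) * ((n:ℝ) - s / k) = (n:ℝ) * k - s := by field_simp
        rw [h]
      have e2 : ((n:ℝ) - s / k) / n = ((n:ℝ) * k - s) / ((n:ℝ) * k) := by
        rw [div_eq_div_iff hn0.ne' hnR.ne']
        field_simp
      rw [e1, e2] at key
      -- l ^ s = (α * l ^ k / α) ^ (s/k) ... relate l^s to (α l^k)^(s/k)
      have hls : l ^ s = (α * l ^ k) ^ (s / k) / α ^ (s / k) := by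
        rw [← Real.div_rpow (by positivity) hα.le, mul_div_cancel_left₀ _ hα.ne']
        rw [← Real.rpow_natCast l k, ← Real.rpow_mul hl]
        congr 1; field_simp
      have hpow : ((1 : ℝ) + α * l ^ k) ^ (n:ℝ) = (1 + α * l ^ k) ^ n := by
        rw [Real.rpow_natCast]
      have hpow2 : (((n:ℝ) * k - s) / ((n:ℝ) * k)) ^ (n:ℝ)
          = (((n:ℝ) * k - s) / ((n:ℝ) * k)) ^ n := by
        rw [Real.rpow_natCast]
      rw [hpow, hpow2] at key
      rw [hls, div_le_iff₀ (by positivity)]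
      have hconst : (s / (α * ((n:ℝ) * k - s))) ^ (s / k) * α ^ (s / k)
          = (s / ((n:ℝ) * k - s)) ^ (s / k) := by
        rw [← Real.mul_rpow (by positivity) hα.le]
        congr 1
        field_simp
      calc (α * l ^ k) ^ (s / k)
          ≤ (s / ((n:ℝ) * k - s)) ^ (s / k) * ((((n:ℝ) * k - s) / ((n:ℝ) * k)) ^ n
              * (1 + α * l ^ k) ^ n) := key
        _ = (s / (α * ((n:ℝ) * k - s))) ^ (s / k) * (((n:ℝ) * k - s) / ((n:ℝ) * k)) ^ n
              * (1 + α * l ^ k) ^ n * α ^ (s / k) := by rw [← hconst]; ring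
end

section
/- Let B be a bounded self-adjoint operator on a complex Hilbert space X with ‖B‖ ≤ 1 such that -1 is not an eigenvalue of B. Suppose the equation x = Bx + f has a solution x* ∈ X. Then for any x_0 ∈ X, the successive approximations x_{n+1} = B x_n + f converge in norm to a solution of x = Bx + f; specifically, they converge to the solution x̂ determined by P x̂ = P x_0, where P is the orthogonal projection onto the eigenspace ker(B - I). -/
open Filter ContinuousLinearMap

local notation "⟪" x ", " y "⟫" => inner ℂ x y

theorem stmt17 {X : Type*} [NormedAddCommGroup X] [InnerProductSpace ℂ X] [CompleteSpace X]
    (B : X →L[ℂ] X) (hB : IsSelfAdjoint B) (hnorm : ‖B‖ ≤ 1)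
    (hm1 : ∀ z : X, B z = -z → z = 0)
    (f xstar : X) (hsol : xstar = B xstar + f)
    (x : ℕ → X) (hrec : ∀ n, x (n + 1) = B (x n) + f) :
    ∃ xhat : X, xhat = B xhat + f ∧
      (∀ z : X, B z = z → (inner ℂ (x 0 - xhat) z : ℂ) = 0) ∧
      Tendsto x atTop (nhds xhat) := by
  classical
  have hadj : ∀ n : ℕ, adjoint (B ^ n) = B ^ n := fun n => by
    rw [← star_eq_adjoint]; exact hB.pow n
  have hswap : ∀ (n : ℕ) (p q : X), ⟪(B ^ n) p, q⟫ = ⟪p, (B ^ n) q⟫ := fun n p q => by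
    conv_rhs => rw [← hadj n]
    rw [adjoint_inner_right]
  have hpowfix : ∀ z : X, B z = z → ∀ k : ℕ, (B ^ k) z = z := by
    intro z hz k
    induction k with
    | zero => simp
    | succ k ih => rw [pow_succ, ContinuousLinearMap.mul_apply, hz, ih]
  have hcontr : ∀ p : X, ‖B p‖ ≤ ‖p‖ := fun p =>
    (B.le_opNorm p).trans (mul_le_of_le_one_left (norm_nonneg p) hnorm)
  -- eigenspace
  set K : Submodule ℂ X := LinearMap.ker ((B - 1 : X →L[ℂ] X) : X →ₗ[ℂ] X) with hK
  have hmemK : ∀ z : X, z ∈ K ↔ B z = z := fun z => by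
    simp [hK, LinearMap.mem_ker, sub_eq_zero]
  haveI : CompleteSpace K := (isClosed_ker (B - 1 : X →L[ℂ] X)).completeSpace_coe
  set d : X := x 0 - xstar with hd
  set u : X := (K.orthogonalProjectionOnto d : X) with hu
  set v : X := d - u with hv
  have hvK : ∀ z ∈ K, ⟪v, z⟫ = 0 := fun z hz =>
    K.starProjection_inner_eq_zero d z hz
  have hBu : B u = u := (hmemK u).1 (K.orthogonalProjectionOnto d).2
  -- the sequence of norms
  set b : ℕ → ℝ := fun n => ‖(B ^ n) v‖ with hb
  set a : ℕ → ℝ := fun n => b n ^ 2 with ha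
  have hbanti : Antitone b := antitone_nat_of_succ_le fun n => by
    have : (B ^ (n + 1)) v = B ((B ^ n) v) := by rw [pow_succ', ContinuousLinearMap.mul_apply]
    simpa only [hb, this] using hcontr ((B ^ n) v)
  have hbnonneg : ∀ n, 0 ≤ b n := fun n => norm_nonneg _
  have haanti : Antitone a := fun m n hmn => by
    exact pow_le_pow_left₀ (hbnonneg n) (hbanti hmn) 2
  have hkey : ∀ k m n : ℕ, m + n = 2 * k → RCLike.re ⟪(B ^ m) v, (B ^ n) v⟫ = a k := by
    intro k m n hmn
    have h1 : ⟪(B ^ m) v, (B ^ n) v⟫ = ⟪v, (B ^ (m + n)) v⟫ := by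
      rw [hswap m, pow_add, ContinuousLinearMap.mul_apply]
    have h2 : ⟪v, (B ^ (m + n)) v⟫ = ⟪(B ^ k) v, (B ^ k) v⟫ := by
      rw [hmn, two_mul, pow_add, ContinuousLinearMap.mul_apply]
      exact (hswap k v ((B ^ k) v)).symm
    rw [h1, h2, @inner_self_eq_norm_sq ℂ]
  -- the even iterates form a Cauchy sequence
  set y : ℕ → X := fun n => (B ^ (2 * n)) v with hy
  have hns : ∀ m n, ‖y m - y n‖ ^ 2 = a (2 * m) - 2 * a (m + n) + a (2 * n) := by
    intro m n
    simp only [hy]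
    rw [@norm_sub_sq ℂ, hkey (m + n) (2 * m) (2 * n) (by ring)]
  have haL : ∃ La : ℝ, Tendsto a atTop (nhds La) :=
    ⟨_, tendsto_atTop_ciInf haanti ⟨0, fun r ⟨n, hn⟩ => hn ▸ sq_nonneg (b n)⟩⟩
  obtain ⟨La, hLa⟩ := haL
  have hyCauchy : CauchySeq y := by
    rw [Metric.cauchySeq_iff]
    intro ε hε
    have hε4 : 0 < ε ^ 2 / 4 := by positivity
    obtain ⟨N, hN⟩ := (Metric.tendsto_atTop.1 hLa) (ε ^ 2 / 4) hε4
    refine ⟨N, fun m hm n hn => ?_⟩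
    have h2m := hN (2 * m) (by omega)
    have h2n := hN (2 * n) (by omega)
    have hmn := hN (m + n) (by omega)
    rw [Real.dist_eq] at h2m h2n hmn
    have hsq : ‖y m - y n‖ ^ 2 < ε ^ 2 := by
      rw [hns m n]
      have := abs_lt.1 h2m
      have := abs_lt.1 h2n
      have := abs_lt.1 hmn
      nlinarith
    rw [dist_eq_norm]
    exact lt_of_pow_lt_pow_left₀ 2 hε.le (by simpa using hsq)
  obtain ⟨w, hw⟩ := cauchySeq_tendsto_of_complete hyCauchy
  -- the limit is a fixed point of B^2, hence of B
  have hB2w : B (B w) = w := by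
    have h1 : Tendsto (fun n => y (n + 1)) atTop (nhds w) :=
      hw.comp (tendsto_add_atTop_nat 1)
    have h2 : ∀ n, y (n + 1) = B (B (y n)) := fun n => by
      simp only [hy]
      rw [show 2 * (n + 1) = 2 * n + 1 + 1 by ring, pow_succ', ContinuousLinearMap.mul_apply, pow_succ', ContinuousLinearMap.mul_apply]
    have h3 : Tendsto (fun n => B (B (y n))) atTop (nhds (B (B w))) :=
      (B.continuous.tendsto (B w)).comp ((B.continuous.tendsto w).comp hw)
    refine tendsto_nhds_unique h3 ?_
    simpa only [← h2] using h1
  have hBw : B w = w := by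
    have h := hm1 (B w - w) (by rw [map_sub, hB2w]; abel)
    rwa [sub_eq_zero] at h
  -- the limit is orthogonal to itself, hence zero
  have hw0 : w = 0 := by
    have horth : ∀ n, ⟪y n, w⟫ = 0 := fun n => by
      rw [hswap, hpowfix w hBw, hvK w ((hmemK w).2 hBw)]
    have h1 : Tendsto (fun n => ⟪y n, w⟫) atTop (nhds ⟪w, w⟫) :=
      hw.inner tendsto_const_nhds
    have h2 : Tendsto (fun n => ⟪y n, w⟫) atTop (nhds (0 : ℂ)) := by
      simp only [horth]
      exact tendsto_const_nhds
    have := tendsto_nhds_unique h1 h2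
    exact inner_self_eq_zero.1 this
  -- b tends to 0
  have hbeven : Tendsto (fun n => b (2 * n)) atTop (nhds 0) := by
    have := hw.norm
    rw [hw0, norm_zero] at this
    exact this
  have hbinf : Tendsto b atTop (nhds (⨅ n, b n)) :=
    tendsto_atTop_ciInf hbanti ⟨0, fun r ⟨n, hn⟩ => hn ▸ hbnonneg n⟩
  have hbeven' : Tendsto (fun n => b (2 * n)) atTop (nhds (⨅ n, b n)) :=
    hbinf.comp (tendsto_atTop_mono (fun n => by simpa using Nat.le_mul_of_pos_left n (by norm_num : (0:ℕ) < 2)) tendsto_id)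
  have hinf0 : (⨅ n, b n) = 0 := tendsto_nhds_unique hbeven' hbeven
  have hb0 : Tendsto b atTop (nhds 0) := hinf0 ▸ hbinf
  have hvlim : Tendsto (fun n => (B ^ n) v) atTop (nhds 0) :=
    tendsto_zero_iff_norm_tendsto_zero.2 hb0
  -- assemble
  have hBxstar : B xstar = xstar - f := by rw [eq_sub_iff_add_eq]; exact hsol.symm
  have hxn : ∀ n, x n = xstar + u + (B ^ n) v := by
    intro n
    induction n with
    | zero =>
      simp only [pow_zero, ContinuousLinearMap.one_apply, hv, hd]
      abel
    | succ n ih =>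
      rw [hrec n, ih, map_add, map_add, hBxstar, hBu, pow_succ', ContinuousLinearMap.mul_apply]
      abel
  refine ⟨xstar + u, ?_, ?_, ?_⟩
  · rw [map_add, hBxstar, hBu]; abel
  · intro z hz
    have : x 0 - (xstar + u) = v := by rw [hxn 0]; simp
    rw [this]
    exact hvK z ((hmemK z).2 hz)
  · have : Tendsto (fun n => xstar + u + (B ^ n) v) atTop (nhds (xstar + u + 0)) :=
      tendsto_const_nhds.add hvlim
    rw [add_zero] at this
    exact this.congr fun n => (hxn n).symm
end

section
/- Let B be a bounded self-adjoint operator on a complex Hilbert space X with ‖B‖ ≤ 1 such that -1 is not an eigenvalue of B. Let f ∈ X satisfy P f = 0, where P is the orthogonal projection onto ker(B - I). Then for any x_0 ∈ X, the residuals r_n = x_n - B x_n - f of the successive approximations x_{n+1} = B x_n + f converge in norm to 0. -/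
open Filter

theorem stmt18 {X : Type*} [NormedAddCommGroup X] [InnerProductSpace ℂ X] [CompleteSpace X]
    (B : X →L[ℂ] X) (hB : IsSelfAdjoint B) (hnorm : ‖B‖ ≤ 1)
    (hm1 : ∀ z : X, B z = -z → z = 0)
    (f : X) (hPf : ∀ z : X, B z = z → (inner ℂ f z : ℂ) = 0)
    (x : ℕ → X) (hrec : ∀ n, x (n + 1) = B (x n) + f) :
    Tendsto (fun n => x n - B (x n) - f) atTop (nhds 0) := by
  set u : X := x 0 - B (x 0) - f with hu
  have hsym : ∀ a b : X, (inner ℂ (B a) b : ℂ) = inner ℂ a (B b) := hB.isSymmetric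
  -- residual recursion
  have hr : ∀ n, x n - B (x n) - f = (B ^ n) u := by
    intro n
    induction n with
    | zero => simp [hu]
    | succ n ih =>
      have h1 : x (n + 1) - B (x (n + 1)) - f = B (x n - B (x n) - f) := by
        rw [hrec n]
        simp only [map_add, map_sub]
        abel
      rw [h1, ih, pow_succ']
      rfl
  -- powers move across inner ℂ product
  have hpow : ∀ (n : ℕ) (a b : X), (inner ℂ ((B ^ n) a) b : ℂ) = inner ℂ a ((B ^ n) b) := by
    intro n
    induction n with
    | zero => intro a b; simp
    | succ n ih =>
      intro a b
      rw [pow_succ]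
      have h2 : ∀ v : X, (B ^ n * B) v = (B ^ n) (B v) := fun _ => rfl
      have hcomm : B * B ^ n = B ^ n * B := (pow_succ' B n).symm.trans (pow_succ B n)
      rw [h2, ih (B a) b, hsym a ((B ^ n) b), h2]
      have h3 : B ((B ^ n) b) = (B ^ n) (B b) := by
        have := congrArg (fun T : X →L[ℂ] X => T b) hcomm
        simpa using this
      rw [h3]
  set c : ℕ → ℝ := fun n => ‖(B ^ n) u‖ ^ 2 with hc
  have hcnn : ∀ n, 0 ≤ c n := fun n => sq_nonneg _
  have hcanti : Antitone c := by
    apply antitone_nat_of_succ_le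
    intro n
    have h1 : ‖(B ^ (n + 1)) u‖ ≤ ‖(B ^ n) u‖ := by
      have h0 : (B ^ (n + 1)) u = B ((B ^ n) u) := by rw [pow_succ']; rfl
      rw [h0]
      calc ‖B ((B ^ n) u)‖ ≤ ‖B‖ * ‖(B ^ n) u‖ := B.le_opNorm _
        _ ≤ 1 * ‖(B ^ n) u‖ := mul_le_mul_of_nonneg_right hnorm (norm_nonneg _)
        _ = ‖(B ^ n) u‖ := one_mul _
    exact pow_le_pow_left₀ (norm_nonneg _) h1 2
  -- inner ℂ products of powers
  have hinner : ∀ n m : ℕ, (inner ℂ ((B ^ n) u) ((B ^ m) u) : ℂ) = inner ℂ ((B ^ (n + m)) u) u := by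
    intro n m
    rw [← hpow m ((B ^ n) u) u, ← ContinuousLinearMap.comp_apply, ← ContinuousLinearMap.mul_def,
      ← pow_add, add_comm m n]
  have hd : ∀ n m : ℕ, (inner ℂ ((B ^ (2 * n)) u) ((B ^ (2 * m)) u) : ℂ) = (c (n + m) : ℂ) := by
    intro n m
    rw [hinner]
    have h2 : 2 * n + 2 * m = (n + m) + (n + m) := by ring
    rw [h2, ← hinner, inner_self_eq_norm_sq_to_K]
    norm_num [hc]
  -- c converges to its infimum L
  have hbdd : BddBelow (Set.range c) := ⟨0, by rintro _ ⟨n, rfl⟩; exact hcnn n⟩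
  set L : ℝ := ⨅ n, c n with hL
  have hcL : Tendsto c atTop (nhds L) := tendsto_atTop_ciInf hcanti hbdd
  have hLle : ∀ n, L ≤ c n := fun n => ciInf_le hbdd n
  -- distance formula for the even-power sequence
  set s : ℕ → X := fun n => (B ^ (2 * n)) u with hs
  have hdist : ∀ n m : ℕ, dist (s n) (s m) ^ 2 = c (2 * n) + c (2 * m) - 2 * c (n + m) := by
    intro n m
    have key : ((dist (s n) (s m) ^ 2 : ℝ) : ℂ) = inner ℂ (s n - s m) (s n - s m) := by
      rw [inner_self_eq_norm_sq_to_K, dist_eq_norm]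
      norm_num
    rw [inner_sub_sub_self, hd n n, hd n m, hd m n, hd m m] at key
    have h2n : n + n = 2 * n := by ring
    have h2m : m + m = 2 * m := by ring
    have hmn : m + n = n + m := by ring
    rw [h2n, h2m, hmn] at key
    have : ((dist (s n) (s m) ^ 2 : ℝ) : ℂ)
        = ((c (2 * n) + c (2 * m) - 2 * c (n + m) : ℝ) : ℂ) := by
      rw [key]; push_cast; ring
    exact_mod_cast this
  -- s is Cauchy
  have hcauchy : CauchySeq s := by
    apply cauchySeq_of_le_tendsto_0 (fun N => Real.sqrt (2 * c (2 * N) - 2 * L))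
    · intro n m N hn hm
      have h1 : dist (s n) (s m) ^ 2 ≤ 2 * c (2 * N) - 2 * L := by
        rw [hdist n m]
        have e1 : c (2 * n) ≤ c (2 * N) := hcanti (by omega)
        have e2 : c (2 * m) ≤ c (2 * N) := hcanti (by omega)
        have e3 : L ≤ c (n + m) := hLle _
        linarith
      calc dist (s n) (s m) = Real.sqrt (dist (s n) (s m) ^ 2) :=
            (Real.sqrt_sq dist_nonneg).symm
        _ ≤ Real.sqrt (2 * c (2 * N) - 2 * L) := Real.sqrt_le_sqrt h1
    · have h2 : Tendsto (fun N => 2 * c (2 * N) - 2 * L) atTop (nhds 0) := by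
        have hsub : Tendsto (fun N => c (2 * N)) atTop (nhds L) :=
          hcL.comp (tendsto_atTop_atTop_of_monotone (fun a b h => by omega)
            (fun b => ⟨b, by omega⟩))
        have := (hsub.const_mul 2).sub (tendsto_const_nhds (x := 2 * L))
        simpa using this
      have := (Real.continuous_sqrt.tendsto 0).comp h2
      simpa [Function.comp_def] using this
  obtain ⟨w, hw⟩ := cauchySeq_tendsto_of_complete hcauchy
  -- B ^ 2 w = w, hence B w = w
  have hB2w : (B ^ 2) w = w := by
    have h1 : Tendsto (fun n => (B ^ 2) (s n)) atTop (nhds ((B ^ 2) w)) :=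
      ((B ^ 2).continuous.tendsto w).comp hw
    have h2 : ∀ n, (B ^ 2) (s n) = s (n + 1) := by
      intro n
      show (B ^ 2) ((B ^ (2 * n)) u) = (B ^ (2 * (n + 1))) u
      rw [← ContinuousLinearMap.mul_apply, ← pow_add]
      have h4 : 2 + 2 * n = 2 * (n + 1) := by ring
      rw [h4]
    have h3 : Tendsto (fun n => s (n + 1)) atTop (nhds w) :=
      hw.comp (tendsto_add_atTop_nat 1)
    rw [show (fun n => (B ^ 2) (s n)) = fun n => s (n + 1) from funext h2] at h1
    exact tendsto_nhds_unique h1 h3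
  have hBw : B w = w := by
    have h1 : B (B w - w) = -(B w - w) := by
      have : B (B w) = w := by
        have : (B ^ 2) w = B (B w) := by rw [sq]; rfl
        rw [← this, hB2w]
      rw [map_sub, this]
      abel
    have := hm1 _ h1
    have h2 : B w = w := by
      have := sub_eq_zero.mp this
      exact this
    exact h2
  -- B ^ k w = w
  have hpoww : ∀ k : ℕ, (B ^ k) w = w := by
    intro k
    induction k with
    | zero => rfl
    | succ k ih => rw [pow_succ', ContinuousLinearMap.mul_apply, ih, hBw]
  -- u ⟂ w
  have huw : (inner ℂ u w : ℂ) = 0 := by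
    have h1 : (inner ℂ u w : ℂ)
        = inner ℂ (x 0) w - inner ℂ (B (x 0)) w - inner ℂ f w := by
      rw [hu, inner_sub_left, inner_sub_left]
    rw [h1, hsym (x 0) w, hBw, hPf w hBw]
    ring
  -- w = 0
  have hw0 : w = 0 := by
    have h1 : ∀ n, (inner ℂ (s n) w : ℂ) = 0 := by
      intro n
      show (inner ℂ ((B ^ (2 * n)) u) w : ℂ) = 0
      rw [hpow, hpoww, huw]
    have h2 : Tendsto (fun n => (inner ℂ (s n) w : ℂ)) atTop (nhds (inner ℂ w w)) :=
      hw.inner tendsto_const_nhds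
    rw [show (fun n => (inner ℂ (s n) w : ℂ)) = fun _ => (0 : ℂ) from funext h1] at h2
    have h3 : (inner ℂ w w : ℂ) = 0 := tendsto_nhds_unique h2 tendsto_const_nhds
    exact inner_self_eq_zero.mp h3
  -- L = 0
  have hL0 : L = 0 := by
    have h1 : Tendsto (fun n => c (2 * n)) atTop (nhds L) :=
      hcL.comp (tendsto_atTop_atTop_of_monotone (fun a b h => by omega)
        (fun b => ⟨b, by omega⟩))
    have h2 : Tendsto (fun n => c (2 * n)) atTop (nhds 0) := by
      have : Tendsto (fun n => ‖s n‖ ^ 2) atTop (nhds (‖w‖ ^ 2)) :=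
        ((continuous_norm.tendsto w).comp hw).pow 2
      rw [hw0] at this
      simpa using this
    exact tendsto_nhds_unique h1 h2
  -- conclude
  rw [show (fun n => x n - B (x n) - f) = fun n => (B ^ n) u from funext hr]
  rw [tendsto_zero_iff_norm_tendsto_zero]
  have h1 : Tendsto (fun n => Real.sqrt (c n)) atTop (nhds 0) := by
    have := (Real.continuous_sqrt.tendsto 0).comp (hL0 ▸ hcL)
    simpa [Function.comp_def] using this
  have h2 : ∀ n, Real.sqrt (c n) = ‖(B ^ n) u‖ := fun n => Real.sqrt_sq (norm_nonneg _)
  rw [show (fun n => ‖(B ^ n) u‖) = fun n => Real.sqrt (c n) from funext fun n => (h2 n).symm]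
  exact h1
end

section
/- Let B be a bounded self-adjoint operator on a complex Hilbert space X with ‖B‖ ≤ 1, and let π be a continuous real function on [-1,1] with π(1) = π(-1) = 0. Suppose x* solves x = Bx + f. Then for any x_0 ∈ X the iterates x_{n+1} = B x_n + f satisfy ‖π(B)(x_n − x*)‖ ≤ γ_n ‖x_0 − x*‖ with γ_n = max_{λ ∈ [-1,1]} |π(λ)| |λ|^n → 0; in particular x_n → x* in the weakened norm ‖x‖_π = ‖π(B)x‖, uniformly for x_0 − x* in any bounded set. -/
open Filter

theorem stmt19 {X : Type*} [NormedAddCommGroup X] [InnerProductSpace ℂ X] [CompleteSpace X]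
    (B : X →L[ℂ] X) (hB : IsSelfAdjoint B) (hnorm : ‖B‖ ≤ 1)
    (π : ℝ → ℝ) (hπ : ContinuousOn π (Set.Icc (-1 : ℝ) 1))
    (hπ1 : π 1 = 0) (hπm1 : π (-1) = 0)
    (f xstar : X) (hsol : xstar = B xstar + f)
    (x : ℕ → X) (hrec : ∀ n, x (n + 1) = B (x n) + f) :
    Tendsto (fun n : ℕ => sSup ((fun l : ℝ => |π l| * |l| ^ n) '' Set.Icc (-1 : ℝ) 1))
        atTop (nhds 0) ∧
    ∀ n : ℕ,
      ‖cfc π B (x n - xstar)‖ ≤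
        sSup ((fun l : ℝ => |π l| * |l| ^ n) '' Set.Icc (-1 : ℝ) 1) * ‖x 0 - xstar‖ := by
  set S : Set ℝ := Set.Icc (-1 : ℝ) 1 with hS
  have h1S : (1 : ℝ) ∈ S := by constructor <;> norm_num
  have hm1S : (-1 : ℝ) ∈ S := by constructor <;> norm_num
  have hcont : ∀ n : ℕ, ContinuousOn (fun l : ℝ => |π l| * |l| ^ n) S :=
    fun n => hπ.abs.mul ((continuous_abs.pow n).continuousOn)
  have hbdd : ∀ n : ℕ, BddAbove ((fun l : ℝ => |π l| * |l| ^ n) '' S) :=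
    fun n => (isCompact_Icc.image_of_continuousOn (hcont n)).bddAbove
  have hne : ∀ n : ℕ, ((fun l : ℝ => |π l| * |l| ^ n) '' S).Nonempty :=
    fun n => ⟨_, Set.mem_image_of_mem _ h1S⟩
  set γ : ℕ → ℝ := fun n => sSup ((fun l : ℝ => |π l| * |l| ^ n) '' S) with hγ
  have h0 : ∀ n : ℕ, 0 ≤ γ n := by
    intro n
    have : (0 : ℝ) ∈ (fun l : ℝ => |π l| * |l| ^ n) '' S :=
      ⟨1, h1S, by simp [hπ1]⟩
    exact le_csSup (hbdd n) this
  have part1 : Tendsto γ atTop (nhds 0) := by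
    rw [Metric.tendsto_atTop]
    intro ε hε
    obtain ⟨M, hM⟩ := isCompact_Icc.exists_bound_of_continuousOn hπ
    set M' : ℝ := max M 1 with hM'def
    have hM'pos : (0 : ℝ) < M' := lt_of_lt_of_le one_pos (le_max_right _ _)
    have h1 : ContinuousWithinAt π S 1 := hπ 1 h1S
    rw [Metric.continuousWithinAt_iff] at h1
    obtain ⟨δ₁, hδ₁, H1⟩ := h1 (ε / 2) (by positivity)
    have h2 : ContinuousWithinAt π S (-1) := hπ (-1) hm1S
    rw [Metric.continuousWithinAt_iff] at h2
    obtain ⟨δ₂, hδ₂, H2⟩ := h2 (ε / 2) (by positivity)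
    set δ : ℝ := min δ₁ δ₂ with hδdef
    have hδ : 0 < δ := lt_min hδ₁ hδ₂
    set r : ℝ := max (1 - δ) 0 with hrdef
    have hr0 : (0 : ℝ) ≤ r := le_max_right _ _
    have hr1 : r < 1 := max_lt (by linarith) one_pos
    have key : ∀ l ∈ S, r < |l| → |π l| < ε / 2 := by
      intro l hl hlr
      rcases le_or_gt 0 l with hl0 | hl0
      · have habs : |l| = l := abs_of_nonneg hl0
        have hld : dist l 1 < δ₁ := by
          rw [Real.dist_eq, abs_of_nonpos (by linarith [hl.2])]
          have : 1 - δ < l := lt_of_le_of_lt (le_max_left _ _) (by rwa [habs] at hlr)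
          have hδle : δ ≤ δ₁ := min_le_left _ _
          linarith
        have := H1 hl hld
        rwa [hπ1, Real.dist_eq, sub_zero] at this
      · have habs : |l| = -l := abs_of_neg hl0
        have hld : dist l (-1) < δ₂ := by
          rw [Real.dist_eq]
          have h1l : -1 ≤ l := hl.1
          rw [abs_of_nonneg (by linarith)]
          have : 1 - δ < -l := lt_of_le_of_lt (le_max_left _ _) (by rwa [habs] at hlr)
          have hδle : δ ≤ δ₂ := min_le_right _ _
          linarith
        have := H2 hl hld
        rwa [hπm1, Real.dist_eq, sub_zero] at this
    have htail : Tendsto (fun n : ℕ => M' * r ^ n) atTop (nhds 0) := by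
      simpa using (tendsto_pow_atTop_nhds_zero_of_lt_one hr0 hr1).const_mul M'
    obtain ⟨N, hN⟩ := (Metric.tendsto_atTop.mp htail) (ε / 2) (by positivity)
    refine ⟨N, fun n hn => ?_⟩
    have htailn : M' * r ^ n < ε / 2 := by
      have := hN n hn
      rwa [Real.dist_eq, sub_zero, abs_of_nonneg (by positivity)] at this
    have hsup : γ n ≤ ε / 2 := by
      apply csSup_le (hne n)
      rintro y ⟨l, hl, rfl⟩
      rcases le_or_gt |l| r with hcase | hcase
      · have h1' : |π l| ≤ M' := le_trans (by simpa [Real.norm_eq_abs] using hM l hl)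
          (le_max_left _ _)
        have h2' : |l| ^ n ≤ r ^ n := pow_le_pow_left₀ (abs_nonneg l) hcase n
        calc |π l| * |l| ^ n ≤ M' * r ^ n :=
              mul_le_mul h1' h2' (by positivity) (le_of_lt hM'pos)
          _ ≤ ε / 2 := le_of_lt htailn
      · have h1' : |π l| ≤ ε / 2 := le_of_lt (key l hl hcase)
        have h2' : |l| ^ n ≤ 1 := pow_le_one₀ (abs_nonneg l) (abs_le.mpr ⟨hl.1, hl.2⟩)
        calc |π l| * |l| ^ n ≤ (ε / 2) * 1 :=
              mul_le_mul h1' h2' (by positivity) (by positivity)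
          _ = ε / 2 := mul_one _
    rw [Real.dist_eq, sub_zero, abs_of_nonneg (h0 n)]
    linarith
  refine ⟨part1, fun n => ?_⟩
  have hyB : x n - xstar = (B ^ n) (x 0 - xstar) := by
    induction n with
    | zero => simp
    | succ n ih =>
        calc x (n + 1) - xstar = (B (x n) + f) - (B xstar + f) := by rw [hrec, ← hsol]
          _ = B (x n) - B xstar := by abel
          _ = B (x n - xstar) := (map_sub B _ _).symm
          _ = B ((B ^ n) (x 0 - xstar)) := by rw [ih]
          _ = (B ^ (n + 1)) (x 0 - xstar) := by
              rw [pow_succ', ContinuousLinearMap.mul_apply]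
  rcases subsingleton_or_nontrivial X with hX | hX
  · have hz : ∀ v : X, v = 0 := fun v => Subsingleton.elim v 0
    rw [hz (x n - xstar), map_zero, norm_zero, hz (x 0 - xstar), norm_zero, mul_zero]
  · have hspec : spectrum ℝ B ⊆ S := by
      intro l hl
      have := (spectrum.norm_le_norm_of_mem hl).trans hnorm
      rw [Real.norm_eq_abs] at this
      exact Set.mem_Icc.mpr (abs_le.mp this)
    have hπs : ContinuousOn π (spectrum ℝ B) := hπ.mono hspec
    have hmul : cfc (fun l : ℝ => π l * l ^ n) B = cfc π B * B ^ n := by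
      rw [cfc_mul π (fun l : ℝ => l ^ n) B hπs (by fun_prop)]
      congr 1
      exact cfc_pow_id B n
    have hBn : cfc π B (x n - xstar) = cfc (fun l : ℝ => π l * l ^ n) B (x 0 - xstar) := by
      rw [hyB, hmul, ContinuousLinearMap.mul_apply]
    rw [hBn]
    have hopnorm : ‖cfc (fun l : ℝ => π l * l ^ n) B‖ ≤ γ n := by
      apply norm_cfc_le (h0 n)
      intro l hl
      have : ‖π l * l ^ n‖ = |π l| * |l| ^ n := by
        rw [Real.norm_eq_abs, abs_mul, abs_pow]
      rw [this]
      exact le_csSup (hbdd n) ⟨l, hspec hl, rfl⟩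
    calc ‖cfc (fun l : ℝ => π l * l ^ n) B (x 0 - xstar)‖
        ≤ ‖cfc (fun l : ℝ => π l * l ^ n) B‖ * ‖x 0 - xstar‖ :=
          ContinuousLinearMap.le_opNorm _ _
      _ ≤ γ n * ‖x 0 - xstar‖ := mul_le_mul_of_nonneg_right hopnorm (norm_nonneg _)
end
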